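/- Let V : ℝⁿ → ℝ be continuously differentiable, bounded from below, and coercive (i.e. V(uᵏ) → ∞ whenever ‖uᵏ‖ → ∞). Let ∇̄V : ℝⁿ × ℝⁿ → ℝⁿ be continuous and satisfy ⟨∇̄V(u,v), v − u⟩ = V(v) − V(u) and ∇̄V(u,u) = ∇V(u) for all u, v ∈ ℝⁿ. Suppose a sequence (uᵏ) and step sizes τ_k with 0 < τ_min ≤ τ_k ≤ τ_max satisfy u^{k+1} = uᵏ − τ_k ∇̄V(uᵏ, u^{k+1}) for all k. Then lim_{k→∞} ∇̄V(uᵏ, u^{k+1}) = 0 and lim_{k→∞} ∇V(uᵏ) = 0; moreover the sequence (uᵏ) has at least one accumulation point, and every accumulation point u* satisfies ∇V(u*) = 0. -/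

import Mathlib

open scoped RealInnerProductSpace

/-- **Convergence of the discrete gradient optimization scheme (Theorem 3.4,
Euclidean instance `M = ℝⁿ`).** For `V : ℝⁿ → ℝ` continuously differentiable,
bounded below and coercive, and `∇̄V` a continuous discrete gradient of `V`,
the iterates of `u^{k+1} = uᵏ − τ_k ∇̄V(uᵏ, u^{k+1})` with
`0 < τ_min ≤ τ_k ≤ τ_max` satisfy `∇̄V(uᵏ,u^{k+1}) → 0`, `∇V(uᵏ) → 0`, the
sequence has an accumulation point, and every accumulation point `u*`
satisfies `∇V(u*) = 0`. -/
theorem discrete_gradient_optimization_convergence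
    {n : ℕ} (V : EuclideanSpace ℝ (Fin n) → ℝ)
    (hV : ContDiff ℝ 1 V)
    (hVbd : BddBelow (Set.range V))
    (hcoercive : ∀ u : ℕ → EuclideanSpace ℝ (Fin n),
      Filter.Tendsto (fun k => ‖u k‖) Filter.atTop Filter.atTop →
      Filter.Tendsto (fun k => V (u k)) Filter.atTop Filter.atTop)
    (DG : EuclideanSpace ℝ (Fin n) → EuclideanSpace ℝ (Fin n) → EuclideanSpace ℝ (Fin n))
    (hDGcont : Continuous (fun p : EuclideanSpace ℝ (Fin n) × EuclideanSpace ℝ (Fin n) =>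
      DG p.1 p.2))
    (hDG : ∀ u v : EuclideanSpace ℝ (Fin n), ⟪DG u v, v - u⟫ = V v - V u)
    (hDGdiag : ∀ u : EuclideanSpace ℝ (Fin n), DG u u = gradient V u)
    (u : ℕ → EuclideanSpace ℝ (Fin n)) (τ : ℕ → ℝ) (τmin τmax : ℝ) (hτmin : 0 < τmin)
    (hτ : ∀ k, τmin ≤ τ k ∧ τ k ≤ τmax)
    (hscheme : ∀ k, u (k + 1) = u k - τ k • DG (u k) (u (k + 1))) :
    Filter.Tendsto (fun k => DG (u k) (u (k + 1))) Filter.atTop (nhds 0) ∧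
    Filter.Tendsto (fun k => gradient V (u k)) Filter.atTop (nhds 0) ∧
    (∃ ustar : EuclideanSpace ℝ (Fin n), MapClusterPt ustar Filter.atTop u) ∧
    (∀ ustar : EuclideanSpace ℝ (Fin n), MapClusterPt ustar Filter.atTop u →
      gradient V ustar = 0) := by
  classical
  open Filter Topology in
  -- energy decrease identity
  have key : ∀ k, V (u (k + 1)) - V (u k) = -(τ k * ‖DG (u k) (u (k + 1))‖ ^ 2) := by
    intro k
    rw [← hDG (u k) (u (k + 1))]
    have h1 : u (k + 1) - u k = -(τ k • DG (u k) (u (k + 1))) := by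
      conv_lhs => rw [hscheme k]
      abel
    rw [h1, inner_neg_right, real_inner_smul_right, real_inner_self_eq_norm_sq]
  -- antitonicity
  have hAnti : Antitone fun k => V (u k) := by
    apply antitone_nat_of_succ_le
    intro k
    have hk := key k
    have hτk := (hτ k).1
    nlinarith [sq_nonneg ‖DG (u k) (u (k + 1))‖, hτmin]
  -- V (u k) converges
  obtain ⟨c, hc⟩ := hVbd
  have hbb : BddBelow (Set.range fun k => V (u k)) :=
    ⟨c, fun x ⟨k, hk⟩ => hk ▸ hc ⟨u k, rfl⟩⟩
  have hVlim := tendsto_atTop_ciInf hAnti hbb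
  set L := ⨅ k, V (u k) with hL
  -- τ k * ‖g k‖² → 0
  have hτg0 : Tendsto (fun k => τ k * ‖DG (u k) (u (k + 1))‖ ^ 2) atTop (𝓝 0) := by
    have h2 : Tendsto (fun k => V (u k) - V (u (k + 1))) atTop (𝓝 (L - L)) :=
      hVlim.sub (hVlim.comp (tendsto_add_atTop_nat 1))
    rw [sub_self] at h2
    refine h2.congr fun k => ?_
    have := key k; linarith
  -- ‖g k‖² → 0
  have hsq : Tendsto (fun k => ‖DG (u k) (u (k + 1))‖ ^ 2) atTop (𝓝 0) := by
    have hb : Tendsto (fun k => τmin⁻¹ * (τ k * ‖DG (u k) (u (k + 1))‖ ^ 2)) atTop (𝓝 0) := by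
      simpa using hτg0.const_mul τmin⁻¹
    refine squeeze_zero (fun k => sq_nonneg _) (fun k => ?_) hb
    rw [le_inv_mul_iff₀ hτmin]
    exact mul_le_mul_of_nonneg_right (hτ k).1 (sq_nonneg _)
  -- ‖g k‖ → 0
  have hgn : Tendsto (fun k => ‖DG (u k) (u (k + 1))‖) atTop (𝓝 0) := by
    have h := (Real.continuous_sqrt.tendsto 0).comp hsq
    rw [Real.sqrt_zero] at h
    exact h.congr fun k => Real.sqrt_sq (norm_nonneg _)
  have hg0 : Tendsto (fun k => DG (u k) (u (k + 1))) atTop (𝓝 0) :=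
    tendsto_zero_iff_norm_tendsto_zero.mpr hgn
  -- differences tend to zero
  have hdiff : Tendsto (fun k => u (k + 1) - u k) atTop (𝓝 0) := by
    apply tendsto_zero_iff_norm_tendsto_zero.mpr
    have hb : Tendsto (fun k => τmax * ‖DG (u k) (u (k + 1))‖) atTop (𝓝 0) := by
      simpa using hgn.const_mul τmax
    refine squeeze_zero (fun k => norm_nonneg _) (fun k => ?_) hb
    have h1 : u (k + 1) - u k = -(τ k • DG (u k) (u (k + 1))) := by
      conv_lhs => rw [hscheme k]
      abel
    rw [h1, norm_neg, norm_smul, Real.norm_eq_abs,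
      abs_of_pos (lt_of_lt_of_le hτmin (hτ k).1)]
    exact mul_le_mul_of_nonneg_right ((hτ k).2) (norm_nonneg _)
  -- boundedness of the sequence
  have hbdd : ∃ R : ℝ, ∀ k, ‖u k‖ ≤ R := by
    by_contra hR
    push_neg at hR
    have hfreq : ∀ m : ℕ, ∃ᶠ k in atTop, (m : ℝ) ≤ ‖u k‖ := by
      intro m
      rw [Filter.frequently_atTop]
      intro N
      set M : ℝ := max ((Finset.range (N + 1)).sup' ⟨0, by simp⟩ fun k => ‖u k‖) (m : ℝ) with hM
      obtain ⟨k, hk⟩ := hR M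
      refine ⟨k, ?_, le_trans (le_max_right _ _) hk.le⟩
      by_contra hkN
      push_neg at hkN
      have hkmem : k ∈ Finset.range (N + 1) := Finset.mem_range.mpr (by omega)
      have := Finset.le_sup' (fun k => ‖u k‖) hkmem
      exact absurd hk (not_lt.mpr (le_trans this (le_max_left _ _)))
    obtain ⟨φ, hφmono, hφ⟩ := Filter.extraction_forall_of_frequently hfreq
    have htend : Tendsto (fun j => ‖u (φ j)‖) atTop atTop :=
      tendsto_atTop_mono (fun j => hφ j) tendsto_natCast_atTop_atTop
    have hco := hcoercive (u ∘ φ) htend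
    obtain ⟨j, hj⟩ := (hco.eventually (eventually_gt_atTop (V (u 0)))).exists
    exact absurd (hAnti (Nat.zero_le (φ j))) (not_le.mpr hj)
  obtain ⟨R, hRb⟩ := hbdd
  have hmem : ∀ k, u k ∈ Metric.closedBall (0 : EuclideanSpace ℝ (Fin n)) R := fun k => by
    simpa [Metric.mem_closedBall, dist_zero_right] using hRb k
  have hBset : Bornology.IsBounded (Metric.closedBall (0 : EuclideanSpace ℝ (Fin n)) R) :=
    Metric.isBounded_closedBall
  -- every cluster point is a critical point
  have hclust : ∀ ustar : EuclideanSpace ℝ (Fin n), MapClusterPt ustar atTop u →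
      gradient V ustar = 0 := by
    intro ustar hcp
    obtain ⟨θ, hθ, hθt⟩ := Filter.subseq_tendsto_of_neBot hcp
    have h1 : Tendsto (fun j => u (θ j + 1)) atTop (𝓝 ustar) := by
      have h := (hdiff.comp hθ.tendsto_atTop).add hθt
      rw [zero_add] at h
      exact h.congr fun j => by simp [Function.comp]
    have h2 : Tendsto (fun j => DG (u (θ j)) (u (θ j + 1))) atTop (𝓝 (DG ustar ustar)) :=
      (hDGcont.tendsto (ustar, ustar)).comp (hθt.prodMk_nhds h1)
    have h3 : Tendsto (fun j => DG (u (θ j)) (u (θ j + 1))) atTop (𝓝 0) :=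
      hg0.comp hθ.tendsto_atTop
    have := tendsto_nhds_unique h2 h3
    rw [hDGdiag] at this
    exact this
  -- continuity of the gradient
  have hgc : Continuous fun x => gradient V x := by
    have h1 : Continuous fun x => fderiv ℝ V x := hV.continuous_fderiv one_ne_zero
    exact (InnerProductSpace.toDual ℝ (EuclideanSpace ℝ (Fin n))).symm.continuous.comp h1
  -- gradient V (u k) → 0
  have hgv : Tendsto (fun k => gradient V (u k)) atTop (𝓝 0) := by
    apply Filter.tendsto_of_subseq_tendsto
    intro ns hns
    obtain ⟨x, -, ms, hms, hx2⟩ := tendsto_subseq_of_bounded hBset (fun j => hmem (ns j))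
    have hxcp : MapClusterPt x atTop u :=
      MapClusterPt.of_comp (hns.comp hms.tendsto_atTop) hx2.mapClusterPt
    refine ⟨ms, ?_⟩
    have h := (hgc.tendsto x).comp hx2
    rw [hclust x hxcp] at h
    exact h.congr fun j => by simp [Function.comp]
  -- existence of a cluster point
  obtain ⟨x, -, φ, hφ, hx⟩ := tendsto_subseq_of_bounded hBset hmem
  exact ⟨hg0, hgv, ⟨x, MapClusterPt.of_comp hφ.tendsto_atTop hx.mapClusterPt⟩, hclust⟩
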